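/- arXiv:1809.06156 — 3 statements merged into one kernel-verified Lean document; each statement's English description precedes it below -/
import Mathlib

section
/- Let S ∈ S^n be positive definite and ρ > 0. The matrix equation ρZ − Z^{-1} = ρY − S in the variable Z ≻ 0 has a unique positive definite solution, given by Z = Q diag(z_i) Qᵀ where ρY − S = Q diag(λ_i) Qᵀ is an eigendecomposition and z_i = (λ_i + √(λ_i² + 4ρ))/(2ρ). -/
open Matrix

/-- Trace of `Aᴴ * A` is the sum of squares of the entries. -/
private lemma trace_conjT_mul_self {n : ℕ} (A : Matrix (Fin n) (Fin n) ℝ) :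
    Matrix.trace (Aᴴ * A) = ∑ j, ∑ i, (A i j) ^ 2 := by
  simp [Matrix.trace, Matrix.mul_apply, Matrix.conjTranspose_apply, Matrix.diag, sq]

private lemma trace_psd_nonneg {n : ℕ} {M : Matrix (Fin n) (Fin n) ℝ}
    (hM : M.PosSemidef) : 0 ≤ Matrix.trace M := by
  rw [Matrix.trace]
  refine Finset.sum_nonneg fun i _ => ?_
  have := hM.dotProduct_mulVec_nonneg (Pi.single i 1)
  simpa [dotProduct, Matrix.mulVec, Pi.single_apply, Finset.mul_sum] using this

private lemma trace_mul_psd_nonneg {n : ℕ} {P Q : Matrix (Fin n) (Fin n) ℝ}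
    (hP : P.PosSemidef) (hQ : Q.PosSemidef) : 0 ≤ Matrix.trace (P * Q) := by
  obtain ⟨s, h, hherm⟩ : ∃ s : Matrix (Fin n) (Fin n) ℝ, s * s = Q ∧ sᴴ = s := by
    open scoped MatrixOrder in
    exact ⟨CFC.sqrt Q, CFC.sqrt_mul_sqrt_self Q hQ.nonneg, (CFC.sqrt_nonneg Q).posSemidef.1⟩
  have : P * Q = P * s * s := by rw [← h, mul_assoc]
  rw [this, trace_mul_comm, ← mul_assoc]
  have : s * P * s = sᴴ * P * s := by rw [hherm]
  rw [this]
  exact trace_psd_nonneg (hP.conjTranspose_mul_mul_same s)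

/-- Positive-definiteness is preserved by conjugation with a matrix having
a right inverse equal to its conjugate transpose composed suitably. -/
private lemma posDef_conj {n : ℕ} {D U : Matrix (Fin n) (Fin n) ℝ}
    (hD : D.PosDef) (hUU : U * Uᴴ = 1) : (U * D * Uᴴ).PosDef := by
  rw [Matrix.posDef_iff_dotProduct_mulVec]
  constructor
  · show (U * D * Uᴴ)ᴴ = U * D * Uᴴ
    rw [Matrix.conjTranspose_mul, Matrix.conjTranspose_mul,
      Matrix.conjTranspose_conjTranspose, hD.1.eq, mul_assoc]
  · intro x hx
    have hy : Uᴴ *ᵥ x ≠ 0 := by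
      intro h
      apply hx
      have h2 : (U * Uᴴ) *ᵥ x = 0 := by
        have := congrArg (fun v => U *ᵥ v) h
        simpa [Matrix.mulVec_mulVec] using this
      rw [hUU, Matrix.one_mulVec] at h2
      exact h2
    have key : dotProduct (star x) ((U * D * Uᴴ) *ᵥ x)
        = dotProduct (star (Uᴴ *ᵥ x)) (D *ᵥ (Uᴴ *ᵥ x)) := by
      rw [star_mulVec, Matrix.conjTranspose_conjTranspose, ← Matrix.mulVec_mulVec,
        ← Matrix.mulVec_mulVec, Matrix.dotProduct_mulVec]
    rw [key]
    exact hD.dotProduct_mulVec_pos hy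

/-- The matrix equation `ρZ − Z⁻¹ = ρY − S` (in `Z ≻ 0`) has a unique positive
definite solution, given explicitly through an eigendecomposition of `ρY − S`. -/
theorem prox_logdet_unique_posdef_solution (n : ℕ) (ρ : ℝ) (hρ : 0 < ρ)
    (S Y : Matrix (Fin n) (Fin n) ℝ) (hS : S.PosDef) (hY : Y.IsHermitian)
    (hA : (ρ • Y - S).IsHermitian) :
    letI Z : Matrix (Fin n) (Fin n) ℝ :=
      (hA.eigenvectorUnitary : Matrix (Fin n) (Fin n) ℝ) *
        Matrix.diagonal (fun i =>
          (hA.eigenvalues i + Real.sqrt ((hA.eigenvalues i) ^ 2 + 4 * ρ)) / (2 * ρ)) *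
        (star hA.eigenvectorUnitary : Matrix (Fin n) (Fin n) ℝ)
    (Z.PosDef ∧ ρ • Z - Z⁻¹ = ρ • Y - S) ∧
      ∀ W : Matrix (Fin n) (Fin n) ℝ, W.PosDef → ρ • W - W⁻¹ = ρ • Y - S → W = Z := by
  set U : Matrix (Fin n) (Fin n) ℝ := (hA.eigenvectorUnitary : Matrix (Fin n) (Fin n) ℝ)
    with hU
  set d : Fin n → ℝ := hA.eigenvalues with hd
  set z : Fin n → ℝ := fun i => (d i + Real.sqrt ((d i) ^ 2 + 4 * ρ)) / (2 * ρ) with hzdef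
  set Z : Matrix (Fin n) (Fin n) ℝ := U * Matrix.diagonal z * star U with hZ
  -- basic facts about z
  have hzpos : ∀ i, 0 < z i := by
    intro i
    have h1 : |d i| < Real.sqrt ((d i) ^ 2 + 4 * ρ) := by
      rw [show (d i) ^ 2 + 4 * ρ = |d i| ^ 2 + 4 * ρ by rw [sq_abs]]
      nlinarith [Real.sq_sqrt (by positivity : (0:ℝ) ≤ |d i| ^ 2 + 4 * ρ),
        Real.sqrt_nonneg (|d i| ^ 2 + 4 * ρ), abs_nonneg (d i)]
    have : 0 < d i + Real.sqrt ((d i) ^ 2 + 4 * ρ) := by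
      have := neg_abs_le (d i); linarith
    exact div_pos this (by linarith)
  have hzne : ∀ i, z i ≠ 0 := fun i => (hzpos i).ne'
  have hscalar : ∀ i, ρ * z i - (z i)⁻¹ = d i := by
    intro i
    have hs : Real.sqrt ((d i) ^ 2 + 4 * ρ) ^ 2 = (d i) ^ 2 + 4 * ρ :=
      Real.sq_sqrt (by positivity)
    have key : ρ * z i * z i - d i * z i = 1 := by
      rw [hzdef]
      field_simp
      nlinarith [hs, Real.sq_sqrt (by positivity : (0:ℝ) ≤ d i ^ 2 + ρ * 4)]
    have hmul : (ρ * z i - d i) * z i = 1 := by linear_combination key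
    have hinv : (z i)⁻¹ = ρ * z i - d i := (eq_inv_of_mul_eq_one_left hmul).symm
    rw [hinv]; ring
  -- unitarity
  have hUV : U * star U = 1 := (Matrix.mem_unitaryGroup_iff).mp hA.eigenvectorUnitary.2
  have hVU : star U * U = 1 := (Matrix.mem_unitaryGroup_iff').mp hA.eigenvectorUnitary.2
  have hSE : Uᴴ = star U := rfl
  -- Z is positive definite
  have hdiagz : (Matrix.diagonal z).PosDef :=
    Matrix.posDef_diagonal_iff.mpr fun i => hzpos i
  have hZpd : Z.PosDef := by
    rw [hZ, ← hSE]
    exact posDef_conj hdiagz (by rw [hSE]; exact hUV)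
  -- inverse of Z
  have hZinv : Z⁻¹ = U * Matrix.diagonal (fun i => (z i)⁻¹) * star U := by
    apply Matrix.inv_eq_right_inv
    rw [hZ]
    calc U * Matrix.diagonal z * star U * (U * Matrix.diagonal (fun i => (z i)⁻¹) * star U)
        = U * Matrix.diagonal z * (star U * U) * Matrix.diagonal (fun i => (z i)⁻¹) * star U := by
          noncomm_ring
      _ = U * (Matrix.diagonal z * Matrix.diagonal (fun i => (z i)⁻¹)) * star U := by
          rw [hVU]; noncomm_ring
      _ = 1 := by
          rw [Matrix.diagonal_mul_diagonal]
          have : (fun i => z i * (z i)⁻¹) = fun _ => (1:ℝ) := by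
            funext i; exact mul_inv_cancel₀ (hzne i)
          rw [this, Matrix.diagonal_one, mul_one, hUV]
  -- spectral theorem
  have hco : (RCLike.ofReal ∘ hA.eigenvalues : Fin n → ℝ) = d := by
    funext i
    simp [hd]
  have hspec : ρ • Y - S = U * Matrix.diagonal d * star U := by
    rw [hA.spectral_theorem, hco, Unitary.conjStarAlgAut_apply]
  -- the equation
  have heq : ρ • Z - Z⁻¹ = ρ • Y - S := by
    rw [hZ, hZinv, hspec]
    have h1 : ρ • (U * Matrix.diagonal z * star U)
        = U * Matrix.diagonal (fun i => ρ * z i) * star U := by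
      rw [← smul_mul_assoc, ← mul_smul_comm, ← Matrix.diagonal_smul]
      rfl
    rw [h1, ← Matrix.sub_mul, ← Matrix.mul_sub]
    simp only [Matrix.diagonal_sub]
    rw [show (fun i => ρ * z i - (z i)⁻¹) = d from funext hscalar]
  refine ⟨⟨hZpd, heq⟩, ?_⟩
  -- uniqueness
  intro W hW hWeq
  have hWZ : ρ • W - W⁻¹ = ρ • Z - Z⁻¹ := by rw [hWeq, heq]
  have hWu : IsUnit W.det := hW.det_pos.ne'.isUnit
  have hZu : IsUnit Z.det := hZpd.det_pos.ne'.isUnit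
  set D : Matrix (Fin n) (Fin n) ℝ := W - Z with hD
  have hkey : ρ • D = -(W⁻¹ * D * Z⁻¹) := by
    have h1 : ρ • D = W⁻¹ - Z⁻¹ := by
      rw [sub_eq_sub_iff_sub_eq_sub] at hWZ
      rw [hD, smul_sub]
      exact hWZ
    have h2 : W⁻¹ * D * Z⁻¹ = Z⁻¹ - W⁻¹ := by
      rw [hD, Matrix.mul_sub, Matrix.nonsing_inv_mul _ hWu, Matrix.sub_mul, one_mul,
        mul_assoc, Matrix.mul_nonsing_inv _ hZu, mul_one]
    rw [h1, h2, neg_sub]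
  -- D is hermitian (symmetric)
  have hDherm : Dᴴ = D := by
    rw [hD, Matrix.conjTranspose_sub, hW.1.eq, hZpd.1.eq]
  -- trace argument
  have htr : ρ * Matrix.trace (Dᴴ * D) + Matrix.trace ((Dᴴ * W⁻¹ * D) * Z⁻¹) = 0 := by
    have h3 : D * (ρ • D) = -(D * (W⁻¹ * D * Z⁻¹)) := by rw [hkey]; simp
    have h4 := congrArg Matrix.trace h3
    rw [Matrix.mul_smul, Matrix.trace_smul, Matrix.trace_neg] at h4
    have h5 : D * (W⁻¹ * D * Z⁻¹) = (D * W⁻¹ * D) * Z⁻¹ := by noncomm_ring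
    rw [h5] at h4
    rw [hDherm]
    simp only [smul_eq_mul] at h4
    linarith [h4]
  have ht1 : 0 ≤ Matrix.trace (Dᴴ * D) := by
    rw [trace_conjT_mul_self]
    positivity
  have ht2 : 0 ≤ Matrix.trace ((Dᴴ * W⁻¹ * D) * Z⁻¹) :=
    trace_mul_psd_nonneg (hW.inv.posSemidef.conjTranspose_mul_mul_same D) hZpd.inv.posSemidef
  have ht0 : Matrix.trace (Dᴴ * D) = 0 := by nlinarith
  have hD0 : D = 0 := by
    rw [trace_conjT_mul_self] at ht0
    ext i j
    have h6 : ∀ j ∈ Finset.univ, (0:ℝ) ≤ ∑ i, (D i j) ^ 2 := by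
      intro j _; positivity
    have h7 := (Finset.sum_eq_zero_iff_of_nonneg h6).mp ht0 j (Finset.mem_univ j)
    have h8 : ∀ i ∈ Finset.univ, (0:ℝ) ≤ (D i j) ^ 2 := by intro i _; positivity
    have h9 := (Finset.sum_eq_zero_iff_of_nonneg h8).mp h7 i (Finset.mem_univ i)
    simpa using pow_eq_zero_iff (n := 2) (by norm_num) |>.mp h9
  have := sub_eq_zero.mp hD0
  exact this
end

section
/- Suppose α ≤ α_c := n/tr(S^{-1}) where S ≻ 0. Then for β > 0 there exists γ < 0 such that the matrix U = [[(γ²/β)I, γI, 0],[γI, βI, 0],[0, 0, βI]] ∈ S^{3n} is positive semidefinite and satisfies tr(GU) > 0, where G = [[−S^{-1}, −I, 0],[−I, 0, 0],[0, 0, −αI]]. Explicitly, any γ in the open interval (−α_c β(1+√(1−α/α_c)), −α_c β(1−√(1−α/α_c))) works. -/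
open Matrix

theorem trace_fromBlocks' {l m R : Type*} [Fintype l] [Fintype m] [AddCommMonoid R]
    (A : Matrix l l R) (B : Matrix l m R) (C : Matrix m l R) (D : Matrix m m R) :
    (fromBlocks A B C D).trace = A.trace + D.trace := by
  simp [Matrix.trace, Matrix.diag, Fintype.sum_sum_type, Matrix.fromBlocks]

theorem posdef_trace_pos {n : ℕ} (hn : 0 < n) (M : Matrix (Fin n) (Fin n) ℝ) (h : M.PosDef) :
    0 < M.trace := by
  have hd : ∀ i, 0 < M i i := by
    intro i
    exact h.diag_pos
  have : 0 < ∑ i, M i i := Finset.sum_pos (fun i _ => hd i) ⟨⟨0, hn⟩, Finset.mem_univ _⟩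
  simpa [Matrix.trace, Matrix.diag] using this

theorem U_psd {n : ℕ} (β γ : ℝ) (hβ : 0 < β) :
    (Matrix.fromBlocks
        (Matrix.fromBlocks ((γ ^ 2 / β) • (1 : Matrix (Fin n) (Fin n) ℝ)) (γ • 1) (γ • 1) (β • 1))
        (0 : Matrix (Fin n ⊕ Fin n) (Fin n) ℝ) (0 : Matrix (Fin n) (Fin n ⊕ Fin n) ℝ)
        (β • (1 : Matrix (Fin n) (Fin n) ℝ))).PosSemidef := by
  have hs0 : Real.sqrt β ≠ 0 := ne_of_gt (Real.sqrt_pos.2 hβ)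
  set C : Matrix ((Fin n ⊕ Fin n) ⊕ Fin n) ((Fin n ⊕ Fin n) ⊕ Fin n) ℝ :=
    fromBlocks (fromBlocks ((γ / Real.sqrt β) • 1) (Real.sqrt β • 1) 0 0) 0 0
      (Real.sqrt β • 1) with hC
  have h1 : γ / Real.sqrt β * (γ / Real.sqrt β) = γ ^ 2 / β := by
    rw [div_mul_div_comm, Real.mul_self_sqrt hβ.le, sq]
  have h2 : γ / Real.sqrt β * Real.sqrt β = γ := div_mul_cancel₀ _ hs0
  have h2' : Real.sqrt β * (γ / Real.sqrt β) = γ := by rw [mul_comm]; exact h2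
  have h3 : Real.sqrt β * Real.sqrt β = β := Real.mul_self_sqrt hβ.le
  have key : (Matrix.fromBlocks
        (Matrix.fromBlocks ((γ ^ 2 / β) • (1 : Matrix (Fin n) (Fin n) ℝ)) (γ • 1) (γ • 1) (β • 1))
        (0 : Matrix (Fin n ⊕ Fin n) (Fin n) ℝ) (0 : Matrix (Fin n) (Fin n ⊕ Fin n) ℝ)
        (β • (1 : Matrix (Fin n) (Fin n) ℝ))) = Cᴴ * C := by
    simp [hC, Matrix.fromBlocks_conjTranspose, Matrix.fromBlocks_transpose, Matrix.transpose_smul,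
      Matrix.fromBlocks_multiply, Matrix.smul_mul, Matrix.mul_smul, smul_smul, h1, h2, h2', h3]
  rw [key]
  exact posSemidef_conjTranspose_mul_self C


/-- Farkas-type certificate: if `α ≤ α_c = n/tr(S⁻¹)` then for every `β > 0`,
any `γ` in the open interval
`(−α_c β(1+√(1−α/α_c)), −α_c β(1−√(1−α/α_c)))` is negative and makes the
block matrix `U = [[(γ²/β)I, γI, 0],[γI, βI, 0],[0,0,βI]]` positive semidefinite
with `tr(GU) > 0`, where `G = [[−S⁻¹, −I, 0],[−I, 0, 0],[0,0,−αI]]`. -/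
theorem farkas_certificate (n : ℕ) (hn : 0 < n)
    (S : Matrix (Fin n) (Fin n) ℝ) (hS : S.PosDef)
    (α β : ℝ) (hα : 0 < α) (hβ : 0 < β)
    (hαc : α ≤ (n : ℝ) / (S⁻¹).trace) :
    ∀ γ : ℝ,
      -((n : ℝ) / (S⁻¹).trace) * β * (1 + Real.sqrt (1 - α / ((n : ℝ) / (S⁻¹).trace))) < γ →
      γ < -((n : ℝ) / (S⁻¹).trace) * β * (1 - Real.sqrt (1 - α / ((n : ℝ) / (S⁻¹).trace))) →
      γ < 0 ∧
      (Matrix.fromBlocks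
        (Matrix.fromBlocks ((γ ^ 2 / β) • (1 : Matrix (Fin n) (Fin n) ℝ)) (γ • 1) (γ • 1) (β • 1))
        (0 : Matrix (Fin n ⊕ Fin n) (Fin n) ℝ) (0 : Matrix (Fin n) (Fin n ⊕ Fin n) ℝ) (β • (1 : Matrix (Fin n) (Fin n) ℝ))).PosSemidef ∧
      0 < ((Matrix.fromBlocks
            (Matrix.fromBlocks (-(S⁻¹)) (-(1 : Matrix (Fin n) (Fin n) ℝ)) (-1) 0)
            (0 : Matrix (Fin n ⊕ Fin n) (Fin n) ℝ) (0 : Matrix (Fin n) (Fin n ⊕ Fin n) ℝ) (-(α • (1 : Matrix (Fin n) (Fin n) ℝ)))) *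
          (Matrix.fromBlocks
            (Matrix.fromBlocks ((γ ^ 2 / β) • (1 : Matrix (Fin n) (Fin n) ℝ)) (γ • 1) (γ • 1) (β • 1))
            (0 : Matrix (Fin n ⊕ Fin n) (Fin n) ℝ) (0 : Matrix (Fin n) (Fin n ⊕ Fin n) ℝ) (β • (1 : Matrix (Fin n) (Fin n) ℝ)))).trace := by
  intro γ h1 h2
  have ht : 0 < (S⁻¹).trace := posdef_trace_pos hn _ hS.inv
  set t := (S⁻¹).trace with htdef
  set a := (n : ℝ) / t with hadef
  have hnpos : (0 : ℝ) < n := by exact_mod_cast hn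
  have ha : 0 < a := div_pos hnpos ht
  have hat : a * t = n := div_mul_cancel₀ _ (ne_of_gt ht)
  have harg : 0 ≤ 1 - α / a := by
    have : α / a ≤ 1 := (div_le_one ha).2 hαc
    linarith
  set s := Real.sqrt (1 - α / a) with hsdef
  have hs2 : s ^ 2 = 1 - α / a := Real.sq_sqrt harg
  have hs0 : 0 ≤ s := Real.sqrt_nonneg _
  have hs1 : s < 1 := by
    rw [hsdef]
    have : 1 - α / a < 1 := by
      have : 0 < α / a := div_pos hα ha
      linarith
    nlinarith [Real.sq_sqrt harg, Real.sqrt_nonneg (1 - α / a)]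
  have hγneg : γ < 0 := by nlinarith
  refine ⟨hγneg, U_psd β γ hβ, ?_⟩
  have hTr : ((Matrix.fromBlocks
            (Matrix.fromBlocks (-(S⁻¹)) (-(1 : Matrix (Fin n) (Fin n) ℝ)) (-1) 0)
            (0 : Matrix (Fin n ⊕ Fin n) (Fin n) ℝ) (0 : Matrix (Fin n) (Fin n ⊕ Fin n) ℝ) (-(α • (1 : Matrix (Fin n) (Fin n) ℝ)))) *
          (Matrix.fromBlocks
            (Matrix.fromBlocks ((γ ^ 2 / β) • (1 : Matrix (Fin n) (Fin n) ℝ)) (γ • 1) (γ • 1) (β • 1))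
            (0 : Matrix (Fin n ⊕ Fin n) (Fin n) ℝ) (0 : Matrix (Fin n) (Fin n ⊕ Fin n) ℝ) (β • (1 : Matrix (Fin n) (Fin n) ℝ)))).trace
      = -(γ ^ 2 / β) * t - 2 * γ * n - α * β * n := by
    simp [Matrix.fromBlocks_multiply, trace_fromBlocks', Matrix.smul_mul, Matrix.mul_smul,
      Matrix.trace_smul, Matrix.trace_one, Matrix.trace_neg, smul_smul, ← htdef]
    ring
  rw [hTr]
  -- reduce to scalar inequality
  have hn' : (n : ℝ) = a * t := hat.symm
  rw [hn']
  have hss : (a * β * s) ^ 2 = a ^ 2 * β ^ 2 - α * a * β ^ 2 := by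
    rw [mul_pow, mul_pow, hs2]
    field_simp
  have hp : 0 < (a * β * s - (γ + a * β)) * (a * β * s + (γ + a * β)) :=
    mul_pos (by nlinarith) (by nlinarith)
  have key : γ ^ 2 + 2 * a * β * γ + α * a * β ^ 2 < 0 := by nlinarith [hp, hss]
  have htβ : 0 < t / β := div_pos ht hβ
  have expand : -(γ ^ 2 / β) * t - 2 * γ * (a * t) - α * β * (a * t)
      = t / β * (-(γ ^ 2 + 2 * a * β * γ + α * a * β ^ 2)) := by
    field_simp
    ring
  rw [expand]
  exact mul_pos htβ (by linarith)
end

section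
/- (Proposition 2) Let (X, Z) be primal-dual optimal for the sparse SEM with parameters (S, α), i.e., they satisfy the KKT conditions: X₁ = (S−Z₁)^{-1}, X ⪰ 0, 0 ⪯ X₄ ⪯ αI, P(X₂)=I, Z ⪰ 0, ‖P^c(Z₂)‖_∞ ≤ γ, ZX = 0, Z₄(X₄−αI) = 0. Then for any β > 0, X̃ = [[X₁/β, X₂ᵀ],[X₂, βX₄]] and Z̃ = [[βZ₁, Z₂ᵀ],[Z₂, Z₄/β]] satisfy the KKT conditions for parameters (βS, βα) with the same γ. -/
open Matrix

lemma psd_smul {n : ℕ} {A : Matrix (Fin n) (Fin n) ℝ} (hA : A.PosSemidef)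
    {c : ℝ} (hc : 0 ≤ c) : (c • A).PosSemidef := by
  refine ⟨?_, fun x => ?_⟩
  · unfold Matrix.IsHermitian
    rw [Matrix.conjTranspose_smul, hA.1]
    norm_num
  · exact (hA.smul hc).2 x

/-- Proposition 2: if `(X, Z)` satisfies the KKT conditions of the sparse SEM
with parameters `(S, α)`, then `X̃ = [[X₁/β, X₂ᵀ],[X₂, βX₄]]` and
`Z̃ = [[βZ₁, Z₂ᵀ],[Z₂, Z₄/β]]` satisfy the KKT conditions for `(βS, βα)`. -/
theorem scaled_sem_kkt (n : ℕ)
    (S : Matrix (Fin n) (Fin n) ℝ) (hS : S.PosDef)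
    (α γ β : ℝ) (hα : 0 < α) (hγ : 0 < γ) (hβ : 0 < β)
    (IA : Set (Fin n × Fin n))
    (X₁ X₂ X₄ Z₁ Z₂ Z₄ : Matrix (Fin n) (Fin n) ℝ)
    -- stationarity
    (hstat : X₁ = (S - Z₁)⁻¹)
    -- primal feasibility
    (hXpsd : (Matrix.fromBlocks X₁ X₂ᵀ X₂ X₄).PosSemidef)
    (hX₄l : X₄.PosSemidef)
    (hX₄u : (α • (1 : Matrix (Fin n) (Fin n) ℝ) - X₄).PosSemidef)
    (hPX₂ : ∀ p ∈ IA, X₂ p.1 p.2 = (1 : Matrix (Fin n) (Fin n) ℝ) p.1 p.2)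
    -- dual feasibility
    (hZpsd : (Matrix.fromBlocks Z₁ Z₂ᵀ Z₂ Z₄).PosSemidef)
    (hPcZ₂ : ∀ p : Fin n × Fin n, p ∉ IA → |Z₂ p.1 p.2| ≤ γ)
    -- complementary slackness
    (hZX : (Matrix.fromBlocks Z₁ Z₂ᵀ Z₂ Z₄) * (Matrix.fromBlocks X₁ X₂ᵀ X₂ X₄) = 0)
    (hZ₄X₄ : Z₄ * (X₄ - α • (1 : Matrix (Fin n) (Fin n) ℝ)) = 0) :
    -- stationarity for (βS, βα)
    (β⁻¹ • X₁ = (β • S - β • Z₁)⁻¹) ∧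
    -- primal feasibility for (βS, βα)
    (Matrix.fromBlocks (β⁻¹ • X₁) X₂ᵀ X₂ (β • X₄)).PosSemidef ∧
    (β • X₄).PosSemidef ∧
    ((β * α) • (1 : Matrix (Fin n) (Fin n) ℝ) - β • X₄).PosSemidef ∧
    (∀ p ∈ IA, X₂ p.1 p.2 = (1 : Matrix (Fin n) (Fin n) ℝ) p.1 p.2) ∧
    -- dual feasibility for (βS, βα)
    (Matrix.fromBlocks (β • Z₁) Z₂ᵀ Z₂ (β⁻¹ • Z₄)).PosSemidef ∧
    (∀ p : Fin n × Fin n, p ∉ IA → |Z₂ p.1 p.2| ≤ γ) ∧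
    -- complementary slackness for (βS, βα)
    ((Matrix.fromBlocks (β • Z₁) Z₂ᵀ Z₂ (β⁻¹ • Z₄)) *
        (Matrix.fromBlocks (β⁻¹ • X₁) X₂ᵀ X₂ (β • X₄)) = 0) ∧
    ((β⁻¹ • Z₄) * (β • X₄ - (β * α) • (1 : Matrix (Fin n) (Fin n) ℝ)) = 0) := by
  have hβ' : (β:ℝ) ≠ 0 := ne_of_gt hβ
  set s : ℝ := Real.sqrt β with hs
  have hs0 : 0 < s := Real.sqrt_pos.mpr hβ
  have hss : s * s = β := Real.mul_self_sqrt hβ.le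
  have hs' : s ≠ 0 := ne_of_gt hs0
  have hinv : s⁻¹ * s⁻¹ = β⁻¹ := by
    rw [← mul_inv, hss]
  -- congruence matrices
  set D : Matrix (Fin n ⊕ Fin n) (Fin n ⊕ Fin n) ℝ :=
    Matrix.fromBlocks (s⁻¹ • 1) 0 0 (s • 1) with hD
  set E : Matrix (Fin n ⊕ Fin n) (Fin n ⊕ Fin n) ℝ :=
    Matrix.fromBlocks (s • 1) 0 0 (s⁻¹ • 1) with hE
  have hDH : Dᴴ = D := by
    rw [hD, Matrix.fromBlocks_conjTranspose]
    simp
  have hEH : Eᴴ = E := by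
    rw [hE, Matrix.fromBlocks_conjTranspose]
    simp
  have hED : E * D = 1 := by
    simp [hD, hE, Matrix.fromBlocks_multiply, Matrix.smul_mul, Matrix.mul_smul,
      smul_smul, mul_inv_cancel₀ hs', inv_mul_cancel₀ hs', Matrix.fromBlocks_one]
  have hXt : Matrix.fromBlocks (β⁻¹ • X₁) X₂ᵀ X₂ (β • X₄)
      = D * (Matrix.fromBlocks X₁ X₂ᵀ X₂ X₄) * D := by
    simp [hD, Matrix.fromBlocks_multiply, Matrix.smul_mul, Matrix.mul_smul,
      smul_smul, hinv, hss, inv_mul_cancel₀ hs', mul_inv_cancel₀ hs']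
  have hZt : Matrix.fromBlocks (β • Z₁) Z₂ᵀ Z₂ (β⁻¹ • Z₄)
      = E * (Matrix.fromBlocks Z₁ Z₂ᵀ Z₂ Z₄) * E := by
    simp [hE, Matrix.fromBlocks_multiply, Matrix.smul_mul, Matrix.mul_smul,
      smul_smul, hinv, hss, inv_mul_cancel₀ hs', mul_inv_cancel₀ hs']
  refine ⟨?_, ?_, ?_, ?_, hPX₂, ?_, hPcZ₂, ?_, ?_⟩
  · -- stationarity
    rw [← smul_sub]
    by_cases h : IsUnit (S - Z₁).det
    · refine (Matrix.inv_eq_right_inv ?_).symm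
      rw [hstat, Matrix.smul_mul, Matrix.mul_smul, smul_smul,
        Matrix.mul_nonsing_inv _ h, mul_inv_cancel₀ hβ', one_smul]
    · have h2 : ¬ IsUnit (β • (S - Z₁)).det := by
        intro hu
        apply h
        rw [isUnit_iff_ne_zero] at hu ⊢
        rw [Matrix.det_smul] at hu
        exact right_ne_zero_of_mul hu
      rw [Matrix.nonsing_inv_apply_not_isUnit _ h2, hstat,
        Matrix.nonsing_inv_apply_not_isUnit _ h, smul_zero]
  · rw [hXt]
    have := hXpsd.mul_mul_conjTranspose_same D
    rwa [hDH] at this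
  · exact psd_smul hX₄l hβ.le
  · have : (β * α) • (1 : Matrix (Fin n) (Fin n) ℝ) - β • X₄
        = β • (α • (1 : Matrix (Fin n) (Fin n) ℝ) - X₄) := by
      rw [smul_sub, smul_smul]
    rw [this]
    exact psd_smul hX₄u hβ.le
  · rw [hZt]
    have := hZpsd.mul_mul_conjTranspose_same E
    rwa [hEH] at this
  · rw [hZt, hXt]
    have : E * Matrix.fromBlocks Z₁ Z₂ᵀ Z₂ Z₄ * E * (D * Matrix.fromBlocks X₁ X₂ᵀ X₂ X₄ * D)
        = E * (Matrix.fromBlocks Z₁ Z₂ᵀ Z₂ Z₄ * ((E * D) * (Matrix.fromBlocks X₁ X₂ᵀ X₂ X₄ * D))) := by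
      simp only [mul_assoc]
    rw [this, hED, one_mul, ← mul_assoc, ← mul_assoc, mul_assoc E, hZX, mul_zero, zero_mul]
  · have : β • X₄ - (β * α) • (1 : Matrix (Fin n) (Fin n) ℝ)
        = β • (X₄ - α • (1 : Matrix (Fin n) (Fin n) ℝ)) := by
      rw [smul_sub, smul_smul]
    rw [this, smul_mul_assoc, mul_smul_comm, hZ₄X₄, smul_zero, smul_zero]
end
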